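/- In the free group F₂ on x and y, the shorter universal words ā_1(x,y), ā_2(x,y), … freely generate a free subgroup of countably infinite rank; equivalently, the group homomorphism from the free group on a countably infinite alphabet {b_1, b_2, …} to F₂ sending b_i ↦ ā_i(x,y) for every i ≥ 1 is injective. -/

import Mathlib

/-- The free group of rank 2 on the generators `x` (index 0) and `y` (index 1). -/
abbrev F2 : Type := FreeGroup (Fin 2)

/-- The generator `x` of `F₂`. -/
def xx : F2 := FreeGroup.of 0

/-- The generator `y` of `F₂`. -/
def yy : F2 := FreeGroup.of 1

/-- `c_i = (x y^i)² x⁻¹`. -/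
def cc (i : ℕ) : F2 := (xx * yy ^ i) ^ 2 * xx⁻¹

/-- The shorter universal word `ā_i(x,y) = y^{c_i} = c_i⁻¹ y c_i`. -/
def aabar (i : ℕ) : F2 := (cc i)⁻¹ * yy * cc i

namespace ShorterUW

open FreeGroup List

section General

variable {α : Type*} [DecidableEq α]

/-- A word is reduced: no adjacent cancelling pair. -/
abbrev Rd (L : List (α × Bool)) : Prop :=
  List.IsChain (fun a b => ¬(a.1 = b.1 ∧ a.2 = !b.2)) L

lemma rd_reduce (L : List (α × Bool)) : Rd (FreeGroup.reduce L) := by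
  induction L with
  | nil => simp [Rd]
  | cons x L ih =>
    rw [FreeGroup.reduce.cons]
    rcases h : FreeGroup.reduce L with _ | ⟨hd, tl⟩
    · simp
    · rw [h] at ih
      by_cases hc : x.1 = hd.1 ∧ x.2 = !hd.2
      · simp only [if_pos hc]
        exact ih.tail
      · simp only [if_neg hc]
        exact List.isChain_cons_cons.mpr ⟨hc, ih⟩

lemma Rd.reduce_eq {L : List (α × Bool)} (h : Rd L) : FreeGroup.reduce L = L := by
  induction L with
  | nil => rfl
  | cons x L ih =>
    rw [FreeGroup.reduce.cons, ih h.tail]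
    cases L with
    | nil => rfl
    | cons hd tl =>
      have hx := (List.isChain_cons_cons.mp h).1
      simp only [if_neg hx]

lemma rd_toWord (g : FreeGroup α) : Rd g.toWord := by
  rw [← FreeGroup.reduce_toWord]
  exact rd_reduce _

/-- Maximal-cancellation decomposition of the reduction of a concatenation of two
reduced words. -/
lemma exists_cancel (u : List (α × Bool)) : ∀ w, Rd u → Rd w →
    ∃ u₁ s w₁, u = u₁ ++ s ∧ w = FreeGroup.invRev s ++ w₁ ∧
      FreeGroup.reduce (u ++ w) = u₁ ++ w₁ := by
  induction u using List.reverseRecOn with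
  | nil =>
    intro w _ hw
    exact ⟨[], [], w, by simp, by simp [FreeGroup.invRev], by simpa using hw.reduce_eq⟩
  | append_singleton u' a ih =>
    intro w hu hw
    by_cases hcan : ∃ w', w = (a.1, !a.2) :: w'
    · obtain ⟨w', rfl⟩ := hcan
      have hstep : FreeGroup.Red.Step ((u' ++ [a]) ++ ((a.1, !a.2) :: w')) (u' ++ w') := by
        have he : (u' ++ [a]) ++ ((a.1, !a.2) :: w') = u' ++ (a.1, a.2) :: (a.1, !a.2) :: w' := by
          simp
        rw [he]
        exact FreeGroup.Red.Step.not
      obtain ⟨u₁, s, w₁, h1, h2, h3⟩ := ih w' (hu.prefix (List.prefix_append _ _)) hw.tail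
      refine ⟨u₁, s ++ [a], w₁, by rw [h1]; simp, ?_, ?_⟩
      · have hi : FreeGroup.invRev (s ++ [a]) = (a.1, !a.2) :: FreeGroup.invRev s := by
          simp [FreeGroup.invRev]
        rw [hi, h2]
        simp
      · rw [FreeGroup.reduce.Step.eq hstep, h3]
    · refine ⟨u' ++ [a], [], w, by simp, by simp [FreeGroup.invRev], ?_⟩
      have hrd : Rd ((u' ++ [a]) ++ w) := by
        apply List.IsChain.append hu hw
        intro p hp q hq
        rw [List.getLast?_concat, Option.mem_some_iff] at hp
        subst hp
        rintro ⟨h1, h2⟩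
        refine hcan ⟨w.tail, ?_⟩
        cases w with
        | nil => simp at hq
        | cons z t =>
          rw [List.head?_cons, Option.mem_some_iff] at hq
          subst hq
          simp only [List.tail_cons]
          congr 1
          refine Prod.ext h1.symm ?_
          show z.2 = !a.2
          rw [h2, Bool.not_not]
      rw [hrd.reduce_eq]

end General

/-! ### The concrete words -/

/-- `k` copies of the letter `y^{±1}`. -/
def yw (k : ℕ) (b : Bool) : List (Fin 2 × Bool) := List.replicate k (1, b)

/-- The reduced word of `c_k = x y^k x y^k x⁻¹`. -/
def Cw (k : ℕ) : List (Fin 2 × Bool) :=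
  ((0, true) :: yw k true ++ (0, true) :: yw k true) ++ [(0, false)]

/-- The reduced word of `c_k⁻¹ = x y^{-k} x⁻¹ y^{-k} x⁻¹`. -/
def Qw (k : ℕ) : List (Fin 2 × Bool) :=
  ((0, true) :: yw k false ++ (0, false) :: yw k false) ++ [(0, false)]

lemma invRev_Cw (k : ℕ) : FreeGroup.invRev (Cw k) = Qw k := by
  simp [Cw, Qw, yw, FreeGroup.invRev, List.reverse_replicate, List.map_replicate]

lemma chain'_replicate_append {P : (Fin 2 × Bool) → (Fin 2 × Bool) → Prop} {a : Fin 2 × Bool}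
    {l : List (Fin 2 × Bool)} (ha : P a a) (hl : List.IsChain P l)
    (hh : ∀ y ∈ l.head?, P a y) (k : ℕ) :
    List.IsChain P (List.replicate k a ++ l) := by
  induction k with
  | zero => simpa using hl
  | succ k ih =>
    rw [List.replicate_succ, List.cons_append]
    refine List.isChain_cons.mpr ⟨?_, ih⟩
    intro y hy
    cases k with
    | zero => exact hh y (by simpa using hy)
    | succ k =>
      simp only [List.replicate_succ, List.cons_append, List.head?_cons] at hy
      obtain rfl : y = a := by simpa using hy.symm
      exact ha

lemma rd_gen (x1 x2 x3 b : Bool) {k : ℕ} (hk : 1 ≤ k) :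
    Rd (((0 : Fin 2), x1) :: (yw k b ++ (((0 : Fin 2), x2) :: (yw k b ++ [((0 : Fin 2), x3)])))) := by
  cases k with
  | zero => omega
  | succ m =>
    have hcons : yw (m + 1) b = ((1 : Fin 2), b) :: yw m b := by
      rw [yw, List.replicate_succ]; rfl
    refine List.isChain_cons.mpr ⟨?_, ?_⟩
    · intro y hy
      rw [hcons] at hy
      rw [List.cons_append, List.head?_cons] at hy
      obtain rfl := Option.mem_some_iff.mp hy
      simp
    · refine chain'_replicate_append (by simp) ?_ ?_ (m + 1)
      · refine List.isChain_cons.mpr ⟨?_, ?_⟩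
        · intro y hy
          rw [hcons, List.cons_append, List.head?_cons] at hy
          obtain rfl := Option.mem_some_iff.mp hy
          simp
        · refine chain'_replicate_append (by simp) (by simp) ?_ (m + 1)
          intro y hy
          rw [List.head?_cons] at hy
          obtain rfl := Option.mem_some_iff.mp hy
          simp
      · intro y hy
        rw [List.head?_cons] at hy
        obtain rfl := Option.mem_some_iff.mp hy
        simp

lemma rd_Qw {k : ℕ} (hk : 1 ≤ k) : Rd (Qw k) := by
  have hQ : Qw k = ((0 : Fin 2), true) ::
      (yw k false ++ (((0 : Fin 2), false) :: (yw k false ++ [((0 : Fin 2), false)]))) := by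
    simp [Qw]
  rw [hQ]
  exact rd_gen true false false false hk

lemma rd_Cw {k : ℕ} (hk : 1 ≤ k) : Rd (Cw k) := by
  have hC : Cw k = ((0 : Fin 2), true) ::
      (yw k true ++ (((0 : Fin 2), true) :: (yw k true ++ [((0 : Fin 2), false)]))) := by
    simp [Cw]
  rw [hC]
  exact rd_gen true true false true hk

lemma cc_eq_mk (k : ℕ) : cc k = FreeGroup.mk (Cw k) := by
  have hx : xx = FreeGroup.mk [((0 : Fin 2), true)] := rfl
  have hxi : xx⁻¹ = FreeGroup.mk [((0 : Fin 2), false)] := by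
    rw [hx, FreeGroup.inv_mk]; rfl
  have hy : yy ^ k = FreeGroup.mk (yw k true) := by
    rw [← FreeGroup.mk_toWord (x := yy ^ k)]
    congr 1
    simp [yy, yw, FreeGroup.toWord_of_pow (1 : Fin 2) k]
  rw [cc, sq, hxi, hx, hy]
  simp only [FreeGroup.mul_mk]
  refine congrArg FreeGroup.mk ?_
  simp [Cw]

lemma cc_inv_eq_mk (k : ℕ) : (cc k)⁻¹ = FreeGroup.mk (Qw k) := by
  rw [cc_eq_mk, FreeGroup.inv_mk, invRev_Cw]

/-- The key ping-pong cancellation lemma. -/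
lemma key {k : ℕ} (hk : 1 ≤ k) (b : Bool) (g : F2)
    (hg : ¬ (Qw k ++ [(1, !b)] <+: g.toWord)) :
    Qw k ++ [(1, b)] <+: ((cc k)⁻¹ * (FreeGroup.mk [((1 : Fin 2), b)]) * (cc k * g)).toWord := by
  obtain ⟨u₁, s, w₁, h1, h2, h3⟩ := exists_cancel (Cw k) g.toWord (rd_Cw hk) (rd_toWord g)
  have hv : (cc k * g).toWord = u₁ ++ w₁ := by
    rw [cc_eq_mk, ← FreeGroup.mk_toWord (x := g), FreeGroup.mul_mk, FreeGroup.toWord_mk, h3]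
  have hvrd : Rd (u₁ ++ w₁) := by rw [← h3]; exact rd_reduce _
  -- the reduced word of `cc k * g` does not start with `(1, !b)`
  have hhead : ∀ y ∈ (u₁ ++ w₁).head?, y ≠ ((1 : Fin 2), !b) := by
    intro y hy hcontra
    subst hcontra
    cases u₁ with
    | cons c u' =>
      -- head is the head of Cw k, namely (0, true)
      have hc : c = ((0 : Fin 2), true) := by
        have h1' : Cw k = c :: (u' ++ s) := by rw [h1]; simp
        have h2' := congrArg List.head? h1'
        rw [Cw] at h2'
        simp only [List.cons_append, List.head?_cons, Option.some_inj] at h2'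
        exact h2'.symm
      simp [hc] at hy
    | nil =>
      simp only [List.nil_append] at hy h1 ⊢
      have hs : FreeGroup.invRev s = Qw k := by rw [← h1, invRev_Cw]
      cases w₁ with
      | nil => simp at hy
      | cons z t =>
        rw [List.head?_cons] at hy
        obtain rfl := Option.mem_some_iff.mp hy
        apply hg
        rw [h2, hs]
        exact ⟨t, by simp⟩
  -- multiply by the middle letter
  have h4 : (FreeGroup.mk [((1 : Fin 2), b)] * (cc k * g)).toWord
      = ((1 : Fin 2), b) :: (u₁ ++ w₁) := by
    rw [← FreeGroup.mk_toWord (x := cc k * g), hv, FreeGroup.mul_mk, FreeGroup.toWord_mk,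
      List.singleton_append]
    refine Rd.reduce_eq ?_
    refine List.isChain_cons.mpr ⟨?_, hvrd⟩
    intro y hy
    rintro ⟨hy1, hy2⟩
    apply hhead y hy
    have : y.2 = !b := by cases hb : y.2 <;> simp_all
    exact Prod.ext hy1.symm this
  -- multiply by `cc k⁻¹`
  have h5 : ((cc k)⁻¹ * (FreeGroup.mk [((1 : Fin 2), b)] * (cc k * g))).toWord
      = Qw k ++ ((1, b) :: (u₁ ++ w₁)) := by
    rw [← FreeGroup.mk_toWord (x := FreeGroup.mk [((1 : Fin 2), b)] * (cc k * g)), h4,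
      cc_inv_eq_mk, FreeGroup.mul_mk, FreeGroup.toWord_mk]
    refine Rd.reduce_eq ?_
    refine List.IsChain.append (rd_Qw hk) ?_ ?_
    · refine List.isChain_cons.mpr ⟨?_, hvrd⟩
      intro y hy
      rintro ⟨hy1, hy2⟩
      apply hhead y hy
      have : y.2 = !b := by cases hb : y.2 <;> simp_all
      exact Prod.ext hy1.symm this
    · intro p hp q hq
      rw [Qw, List.getLast?_concat] at hp
      obtain rfl := Option.mem_some_iff.mp hp
      rw [List.head?_cons] at hq
      obtain rfl := Option.mem_some_iff.mp hq
      simp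
  rw [mul_assoc, h5]
  exact ⟨u₁ ++ w₁, by simp⟩

/-- Comparable prefixes built over replicate blocks force equal indices. -/
lemma repl_prefix {A : Type*} {a b c : A} (hab : b ≠ a) (hac : c ≠ a) :
    ∀ i j (r s : List A), List.replicate i a ++ b :: r <+: List.replicate j a ++ c :: s → i = j := by
  intro i
  induction i with
  | zero =>
    intro j r s h
    cases j with
    | zero => rfl
    | succ j =>
      exfalso
      simp only [List.replicate_zero, List.replicate_succ, List.nil_append, List.cons_append,
        List.cons_prefix_cons] at h
      exact hab h.1
  | succ i ih =>
    intro j r s h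
    cases j with
    | zero =>
      exfalso
      simp only [List.replicate_zero, List.replicate_succ, List.nil_append, List.cons_append,
        List.cons_prefix_cons] at h
      exact hac h.1.symm
    | succ j =>
      simp only [List.replicate_succ, List.cons_append, List.cons_prefix_cons] at h
      exact congrArg Nat.succ (ih j r s h.2)

lemma Qw_prefix_Qw {i j : ℕ} (h : Qw i <+: Qw j) : i = j := by
  simp only [Qw, List.cons_append, List.append_assoc, List.cons_prefix_cons,
    List.singleton_append] at h
  exact repl_prefix (a := ((1 : Fin 2), false)) (by decide) (by decide) i j _ _ h.2

end ShorterUW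

open ShorterUW FreeGroup List in
/-- The shorter universal words `ā_1(x,y), ā_2(x,y), …` freely generate a free subgroup of
countably infinite rank in `F₂`: the homomorphism from the free group on the countably infinite
alphabet `{b_1, b_2, …}` (indexed by `ℕ`, index `i` corresponding to `b_{i+1}`) to `F₂` sending
`b_i ↦ ā_i(x,y)` is injective. -/
theorem shorter_universal_words_free :
    Function.Injective ⇑(FreeGroup.lift fun i : ℕ => aabar (i + 1)) := by
  classical
  let X : ℕ → Set F2 := fun i => {g | Qw (i + 1) ++ [(1, true)] <+: g.toWord}
  let Y : ℕ → Set F2 := fun i => {g | Qw (i + 1) ++ [(1, false)] <+: g.toWord}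
  have hQpref : ∀ (i : ℕ) (b : Bool) (g : F2),
      g ∈ {g : F2 | Qw (i + 1) ++ [(1, b)] <+: g.toWord} → Qw (i + 1) <+: g.toWord := by
    intro i b g hg
    exact (List.prefix_append _ _).trans hg
  have hdisj : ∀ (b₁ b₂ : Bool) (i j : ℕ), i ≠ j →
      Disjoint {g : F2 | Qw (i + 1) ++ [(1, b₁)] <+: g.toWord}
        {g : F2 | Qw (j + 1) ++ [(1, b₂)] <+: g.toWord} := by
    intro b₁ b₂ i j hij
    rw [Set.disjoint_left]
    intro g hgi hgj
    have h1 := hQpref i b₁ g hgi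
    have h2 := hQpref j b₂ g hgj
    rcases List.prefix_or_prefix_of_prefix h1 h2 with h | h
    · exact hij (Nat.succ_injective (Qw_prefix_Qw h))
    · exact hij (Nat.succ_injective (Qw_prefix_Qw h).symm)
  have haabar : ∀ k, aabar k = (cc k)⁻¹ * FreeGroup.mk [((1 : Fin 2), true)] * cc k := by
    intro k; rfl
  have haabarinv : ∀ k, (aabar k)⁻¹ = (cc k)⁻¹ * FreeGroup.mk [((1 : Fin 2), false)] * cc k := by
    intro k
    rw [aabar]
    have : yy⁻¹ = FreeGroup.mk [((1 : Fin 2), false)] := by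
      rw [show yy = FreeGroup.mk [((1 : Fin 2), true)] from rfl, FreeGroup.inv_mk]; rfl
    rw [← this]
    group
  refine FreeGroup.injective_lift_of_ping_pong (fun i : ℕ => aabar (i + 1)) X Y ?_ ?_ ?_ ?_ ?_ ?_
  · -- nonempty
    intro i
    refine ⟨FreeGroup.mk (Qw (i + 1) ++ [(1, true)]), ?_⟩
    show Qw (i + 1) ++ [(1, true)] <+: _
    rw [FreeGroup.toWord_mk]
    rw [Rd.reduce_eq ?_]
    · refine List.IsChain.append (rd_Qw (by omega)) (by simp) ?_
      intro p hp q hq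
      rw [Qw, List.getLast?_concat] at hp
      obtain rfl := Option.mem_some_iff.mp hp
      rw [List.head?_cons] at hq
      obtain rfl := Option.mem_some_iff.mp hq
      simp
  · exact fun i j hij => hdisj true true i j hij
  · exact fun i j hij => hdisj false false i j hij
  · -- X i disjoint Y j
    intro i j
    rcases eq_or_ne i j with rfl | hij
    · rw [Set.disjoint_left]
      intro g hgi hgj
      have h1 : Qw (i + 1) ++ [((1 : Fin 2), true)] <+: g.toWord := hgi
      have h2 : Qw (i + 1) ++ [((1 : Fin 2), false)] <+: g.toWord := hgj
      have : Qw (i + 1) ++ [((1 : Fin 2), true)] = Qw (i + 1) ++ [((1 : Fin 2), false)] := by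
        rcases List.prefix_or_prefix_of_prefix h1 h2 with h | h
        · exact h.eq_of_length (by simp)
        · exact (h.eq_of_length (by simp)).symm
      simpa using List.append_cancel_left this
    · exact hdisj true false i j hij
  · -- ping
    intro i
    rintro h ⟨g, hg, rfl⟩
    simp only [Set.mem_compl_iff] at hg
    show Qw (i + 1) ++ [(1, true)] <+: (aabar (i + 1) * g).toWord
    rw [haabar (i + 1), mul_assoc]
    exact key (by omega) true g (by simpa [Y] using hg)
  · -- pong
    intro i
    rintro h ⟨g, hg, rfl⟩
    simp only [Set.mem_compl_iff] at hg
    show Qw (i + 1) ++ [(1, false)] <+: ((aabar (i + 1))⁻¹ * g).toWord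
    rw [haabarinv (i + 1), mul_assoc]
    exact key (by omega) false g (by simpa [X] using hg)
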